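/- Let V be a finite-dimensional subspace and W a closed subspace of a Hilbert space H with β(V,W) > 0, let w ∈ W, and let (u*, v*) ∈ H_w × V be the unique minimizing pair of ‖u - v‖ over u ∈ H_w and v ∈ V. Then u* - v* is orthogonal to both V and W^⊥. -/

import Mathlib

open scoped RealInnerProductSpace

lemma aux_inner_zero {H : Type*} [NormedAddCommGroup H] [InnerProductSpace ℝ H]
    (x y : H) (h : ∀ t : ℝ, ‖x‖ ≤ ‖x + t • y‖) : ⟪x, y⟫ = 0 := by
  by_contra hc
  set c : ℝ := ⟪x, y⟫ with hcdef
  set N : ℝ := ‖y‖ ^ 2 with hN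
  have hN0 : 0 ≤ N := by positivity
  set t : ℝ := -c / (N + 1) with ht
  have h1 : ‖x‖ ^ 2 ≤ ‖x + t • y‖ ^ 2 := by
    have := h t
    nlinarith [norm_nonneg x, norm_nonneg (x + t • y)]
  have h2 : ‖x + t • y‖ ^ 2 = ‖x‖ ^ 2 + 2 * (t * c) + t ^ 2 * N := by
    rw [norm_add_sq_real, real_inner_smul_right, norm_smul, mul_pow,
      Real.norm_eq_abs, sq_abs, ← hcdef, ← hN]
  have h3 : 0 ≤ 2 * (t * c) + t ^ 2 * N := by nlinarith
  have hc2 : 0 < c ^ 2 := by positivity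
  have hNp : (0:ℝ) < N + 1 := by linarith
  rw [ht] at h3
  have : 2 * (-c / (N + 1) * c) + (-c / (N + 1)) ^ 2 * N
      = c ^ 2 / (N + 1) ^ 2 * (N - 2 * (N + 1)) := by field_simp; ring
  nlinarith [sq_nonneg (N+1), div_pos hc2 (by positivity : (0:ℝ) < (N+1)^2)]

/-- If `(u*, v*) ∈ H_w × V` is the minimizing pair of `‖u - v‖` over `H_w × V`
(where `H_w = {u : P_W u = w}` and `β(V,W) > 0`), then `u* - v*` is orthogonal
to both `V` and `W^⊥`. -/
theorem stmt8 {H : Type*} [NormedAddCommGroup H] [InnerProductSpace ℝ H] [CompleteSpace H]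
    (V W : Submodule ℝ H) [FiniteDimensional ℝ V] [W.HasOrthogonalProjection]
    (hβ : ∃ β > (0 : ℝ), ∀ v ∈ V, β * ‖v‖ ≤ ‖(W.orthogonalProjectionOnto v : H)‖)
    (w : H) (hw : w ∈ W) (ustar vstar : H)
    (hu : (W.orthogonalProjectionOnto ustar : H) = w) (hv : vstar ∈ V)
    (hmin : ∀ u v : H, (W.orthogonalProjectionOnto u : H) = w → v ∈ V →
      ‖ustar - vstar‖ ≤ ‖u - v‖) :
    (∀ v ∈ V, ⟪ustar - vstar, v⟫ = 0) ∧ (∀ η ∈ Wᗮ, ⟪ustar - vstar, η⟫ = 0) := by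
  constructor
  · intro v hvV
    apply aux_inner_zero
    intro t
    have := hmin ustar (vstar - t • v) hu (V.sub_mem hv (V.smul_mem t hvV))
    calc ‖ustar - vstar‖ ≤ ‖ustar - (vstar - t • v)‖ := this
      _ = ‖ustar - vstar + t • v‖ := by congr 1; abel
  · intro η hη
    apply aux_inner_zero
    intro t
    have hproj : (W.orthogonalProjectionOnto (ustar + t • η) : H) = w := by
      rw [map_add, map_smul]
      have : W.orthogonalProjectionOnto η = 0 :=
        Submodule.orthogonalProjectionOnto_apply_of_mem_orthogonal hη
      rw [this]
      simp [hu]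
    have := hmin (ustar + t • η) vstar hproj hv
    calc ‖ustar - vstar‖ ≤ ‖ustar + t • η - vstar‖ := this
      _ = ‖ustar - vstar + t • η‖ := by congr 1; abel
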